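/- arXiv:0804.3074 — 4 statements merged into one kernel-verified Lean document; each statement's English description precedes it below -/
import Mathlib

section
/- For an integer q ≥ 2, a partition μ with parts restricted to the set {q^k - q^{k-i} : i = 1,...,k} is q-compatible with at most one partition λ having at most k nonzero parts. (Here μ is q-compatible with λ if for each i the multiplicity of the part q^k - q^{k-i} in μ lies in the interval [δ_i(λ), δ_i(λ) + q^{λ_i}), where δ_i(λ) := Σ_{j=λ_{i+1}}^{λ_i-1} q^j with λ_{k+1} := 0.) -/
noncomputable section

/-- `λ_{i+1}` for a partition encoded by `lam : Fin k → ℕ` (with `λ_{k+1} = 0`). -/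
def nextPart {k : ℕ} (lam : Fin k → ℕ) (i : Fin k) : ℕ :=
  if h : (i : ℕ) + 1 < k then lam ⟨(i : ℕ) + 1, h⟩ else 0

/-- `δ_i(λ) := Σ_{j=λ_{i+1}}^{λ_i - 1} q^j`. -/
def deltaStat (q : ℕ) {k : ℕ} (lam : Fin k → ℕ) (i : Fin k) : ℕ :=
  ∑ j ∈ Finset.Ico (nextPart lam i) (lam i), q ^ j

lemma interval_lt_aux (q b a a' mm : ℕ) (hba : b ≤ a) (haa : a < a')
    (h2 : mm < ∑ j ∈ Finset.Ico b a, q ^ j + q ^ a)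
    (h1' : ∑ j ∈ Finset.Ico b a', q ^ j ≤ mm) : False := by
  have hstep : ∑ j ∈ Finset.Ico b (a + 1), q ^ j
      = ∑ j ∈ Finset.Ico b a, q ^ j + q ^ a :=
    Finset.sum_Ico_succ_top hba _
  have hsub : ∑ j ∈ Finset.Ico b (a + 1), q ^ j ≤ ∑ j ∈ Finset.Ico b a', q ^ j := by
    apply Finset.sum_le_sum_of_subset
    exact Finset.Ico_subset_Ico le_rfl haa
  omega

lemma interval_unique (q b a a' mm : ℕ) (hba : b ≤ a) (hba' : b ≤ a')
    (h1 : ∑ j ∈ Finset.Ico b a, q ^ j ≤ mm)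
    (h2 : mm < ∑ j ∈ Finset.Ico b a, q ^ j + q ^ a)
    (h1' : ∑ j ∈ Finset.Ico b a', q ^ j ≤ mm)
    (h2' : mm < ∑ j ∈ Finset.Ico b a', q ^ j + q ^ a') : a = a' := by
  rcases lt_trichotomy a a' with hlt | heq | hgt
  · exact absurd (interval_lt_aux q b a a' mm hba hlt h2 h1') (fun x => x)
  · exact heq
  · exact absurd (interval_lt_aux q b a' a mm hba' hgt h2' h1) (fun x => x)

/-- For `q ≥ 2`, a partition `μ` with parts restricted to `{q^k - q^{k-i} : i = 1,…,k}`
(encoded by its multiplicity function `m`, where `m i` is the multiplicity of the part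
`q^k - q^{k-i}`) is q-compatible with at most one partition `λ` with at most `k` nonzero
parts: if `δ_i(λ) ≤ m i < δ_i(λ) + q^{λ_i}` for all `i`, and likewise for `λ'`, then `λ = λ'`. -/
theorem q_compatible_unique (q k : ℕ) (hq : 2 ≤ q) (m lam lam' : Fin k → ℕ)
    (hlam : Antitone lam) (hlam' : Antitone lam')
    (h : ∀ i, deltaStat q lam i ≤ m i ∧ m i < deltaStat q lam i + q ^ lam i)
    (h' : ∀ i, deltaStat q lam' i ≤ m i ∧ m i < deltaStat q lam' i + q ^ lam' i) :
    lam = lam' := by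
  have hnp : ∀ (f : Fin k → ℕ), Antitone f → ∀ i : Fin k, nextPart f i ≤ f i := by
    intro f hf i
    unfold nextPart
    split
    · exact hf (by simp [Fin.le_def])
    · exact Nat.zero_le _
  have key : ∀ i : Fin k, nextPart lam i = nextPart lam' i → lam i = lam' i := by
    intro i hi
    have H := h i
    have H' := h' i
    unfold deltaStat at H H'
    rw [hi] at H
    exact interval_unique q (nextPart lam' i) (lam i) (lam' i) (m i)
      (hi ▸ hnp lam hlam i) (hnp lam' hlam' i) H.1 H.2 H'.1 H'.2
  have main : ∀ d, ∀ i : Fin k, k - (i : ℕ) ≤ d → lam i = lam' i := by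
    intro d
    induction d with
    | zero => intro i hi; omega
    | succ n ih =>
      intro i hi
      apply key
      unfold nextPart
      split
      · next hlt =>
          exact ih ⟨(i : ℕ) + 1, hlt⟩ (by simp; omega)
      · rfl
  funext i
  exact main k i (Nat.sub_le _ _)
end
end

section
/- For an integer q ≥ 2, setting t = 1 in the identity of Theorem (compat) shows that the ordinary q-binomial coefficient [n choose k]_q (which for q a prime power counts k-subspaces of F_q^n) equals the cardinality of the set of partitions μ that are q-compatible with some partition λ fitting inside a k × (n-k) rectangle. -/
noncomputable section

/-! ### Partitions in a box -/

/-- Antitone functions `Fin k → ℕ` bounded by `m` (partitions in a `k × m` box). -/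
def antiFinset (m k : ℕ) : Finset (Fin k → ℕ) :=
  (Fintype.piFinset fun _ => Finset.range (m + 1)).filter
    fun f => ∀ i j : Fin k, i ≤ j → f j ≤ f i

lemma mem_antiFinset {m k : ℕ} {f : Fin k → ℕ} :
    f ∈ antiFinset m k ↔ (∀ i, f i ≤ m) ∧ Antitone f := by
  simp only [antiFinset, Finset.mem_filter, Fintype.mem_piFinset, Finset.mem_range,
    Nat.lt_succ_iff]
  constructor
  · rintro ⟨h1, h2⟩; exact ⟨h1, fun i j hij => h2 i j hij⟩
  · rintro ⟨h1, h2⟩; exact ⟨h1, fun i j hij => h2 hij⟩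

/-- The generating-function count `Σ_{λ ⊆ k×m} ∏_i q^{λ_i}`. -/
def Nq (q m k : ℕ) : ℕ := ∑ lam ∈ antiFinset m k, ∏ i, q ^ lam i

lemma antiFinset_zero_right (m : ℕ) : antiFinset m 0 = {finZeroElim} := by
  apply Finset.eq_singleton_iff_unique_mem.mpr
  constructor
  · rw [mem_antiFinset]
    exact ⟨fun i => i.elim0, fun i => i.elim0⟩
  · intro f _; funext i; exact i.elim0

lemma Nq_zero_right (q m : ℕ) : Nq q m 0 = 1 := by
  simp [Nq, antiFinset_zero_right]

lemma antiFinset_zero_left (k : ℕ) : antiFinset 0 k = {fun _ => 0} := by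
  apply Finset.eq_singleton_iff_unique_mem.mpr
  constructor
  · rw [mem_antiFinset]
    exact ⟨fun i => le_rfl, fun i j _ => le_rfl⟩
  · intro f hf; rw [mem_antiFinset] at hf; funext i; exact Nat.le_zero.mp (hf.1 i)

lemma Nq_zero_left (q k : ℕ) : Nq q 0 k = 1 := by
  simp [Nq, antiFinset_zero_left]

lemma snoc_eq {k : ℕ} (f : Fin k → ℕ) (x : ℕ) (i : Fin (k + 1)) :
    Fin.snoc (α := fun _ => ℕ) f x i = if h : (i : ℕ) < k then f ⟨i, h⟩ else x := by
  induction i using Fin.lastCases with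
  | last => simp
  | cast i =>
      rw [Fin.snoc_castSucc, dif_pos (by simp)]
      exact congrArg f (Fin.ext (by simp)).symm

/-- The key recurrence for `Nq`, obtained by splitting according to whether the
last part is zero (drop it) or all parts are positive (subtract one everywhere). -/
lemma Nq_succ_succ (q m k : ℕ) :
    Nq q (m + 1) (k + 1) = Nq q (m + 1) k + q ^ (k + 1) * Nq q m (k + 1) := by
  classical
  unfold Nq
  rw [← Finset.sum_filter_add_sum_filter_not (antiFinset (m + 1) (k + 1))
    (fun f => f (Fin.last k) = 0)]
  congr 1
  · -- last part zero: drop it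
    refine Finset.sum_nbij' (fun f => f ∘ Fin.castSucc) (fun f => Fin.snoc f 0)
      ?_ ?_ ?_ ?_ ?_
    · intro f hf
      rw [Finset.mem_filter, mem_antiFinset] at hf
      rw [mem_antiFinset]
      exact ⟨fun i => hf.1.1 _, fun i j hij => hf.1.2 (Fin.castSucc_le_castSucc_iff.mpr hij)⟩
    · intro f hf
      rw [mem_antiFinset] at hf
      rw [Finset.mem_filter, mem_antiFinset]
      refine ⟨⟨fun i => ?_, fun i j hij => ?_⟩, ?_⟩
      · rw [snoc_eq]
        split
        · exact hf.1 _
        · exact Nat.zero_le _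
      · rw [snoc_eq, snoc_eq]
        split
        · next hj =>
            rw [dif_pos (lt_of_le_of_lt (Fin.le_def.mp hij) hj)]
            exact hf.2 (show (⟨(i:ℕ), _⟩ : Fin k) ≤ ⟨(j:ℕ), hj⟩ from Fin.le_def.mp hij)
        · exact Nat.zero_le _
      · rw [snoc_eq, dif_neg (by simp)]
    · intro f hf
      rw [Finset.mem_filter] at hf
      funext i
      show Fin.snoc (α := fun _ => ℕ) (f ∘ Fin.castSucc) 0 i = f i
      rw [snoc_eq]
      split
      · next h => exact congrArg f (Fin.ext (by simp))
      · next h =>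
          have hi : i = Fin.last k := Fin.ext (by have := i.isLt; simp; omega)
          rw [hi]; exact hf.2.symm
    · intro f hf
      funext i
      show Fin.snoc (α := fun _ => ℕ) f 0 (Fin.castSucc i) = f i
      simp
    · intro f hf
      rw [Finset.mem_filter] at hf
      rw [Fin.prod_univ_castSucc]
      simp [hf.2]
  · -- all parts positive: subtract one everywhere
    rw [Finset.mul_sum]
    refine Finset.sum_nbij' (fun f i => f i - 1) (fun f i => f i + 1)
      ?_ ?_ ?_ ?_ ?_
    · intro f hf
      rw [Finset.mem_filter, mem_antiFinset] at hf
      rw [mem_antiFinset]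
      refine ⟨fun i => ?_, fun i j hij => ?_⟩
      · have := hf.1.1 i; omega
      · have := hf.1.2 hij; dsimp only; omega
    · intro f hf
      rw [mem_antiFinset] at hf
      rw [Finset.mem_filter, mem_antiFinset]
      refine ⟨⟨fun i => ?_, fun i j hij => ?_⟩, ?_⟩
      · have := hf.1 i; omega
      · have := hf.2 hij; dsimp only; omega
      · dsimp only; omega
    · intro f hf
      rw [Finset.mem_filter, mem_antiFinset] at hf
      have hpos : ∀ i, 1 ≤ f i := fun i => by
        have h1 := hf.1.2 (Fin.le_last i); have h2 := hf.2; omega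
      funext i
      have := hpos i
      dsimp only
      omega
    · intro f hf
      funext i
      dsimp only
      omega
    · intro f hf
      rw [Finset.mem_filter, mem_antiFinset] at hf
      have hpos : ∀ i, 1 ≤ f i := fun i => by
        have h1 := hf.1.2 (Fin.le_last i); have h2 := hf.2; omega
      have step : ∀ i : Fin (k+1), q ^ f i = q ^ (f i - 1) * q := by
        intro i
        rw [← pow_succ]
        congr 1
        have := hpos i
        omega
      rw [Finset.prod_congr rfl fun i _ => step i, Finset.prod_mul_distrib,
        Finset.prod_const]
      simp only [Finset.card_univ, Fintype.card_fin]
      ring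

/-! ### The rational identity -/

/-- Numerator product `∏_{j<k} (q^{m+j+1} - 1)`. -/
def Pq (q : ℚ) (m k : ℕ) : ℚ := ∏ j ∈ Finset.range k, (q ^ (m + j + 1) - 1)

/-- Denominator product `∏_{j<k} (q^{j+1} - 1)`. -/
def Dq (q : ℚ) (k : ℕ) : ℚ := ∏ j ∈ Finset.range k, (q ^ (j + 1) - 1)

/-- `Fq q m k = [m+k choose k]_q`. -/
def Fq (q : ℚ) (m k : ℕ) : ℚ := Pq q m k / Dq q k

lemma Dq_ne_zero {q : ℚ} (hq : 1 < q) (k : ℕ) : Dq q k ≠ 0 := by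
  refine Finset.prod_ne_zero_iff.mpr fun j _ => ?_
  have : 1 < q ^ (j + 1) := one_lt_pow₀ hq (by omega)
  intro h
  rw [sub_eq_zero] at h
  rw [← h] at this
  exact lt_irrefl _ this

lemma Pq_succ (q : ℚ) (m k : ℕ) :
    Pq q (m + 1) (k + 1) = Pq q (m + 1) k * (q ^ (m + k + 2) - 1) := by
  rw [Pq, Finset.prod_range_succ]
  congr 3
  omega

lemma Pq_succ' (q : ℚ) (m k : ℕ) :
    Pq q m (k + 1) = (q ^ (m + 1) - 1) * Pq q (m + 1) k := by
  rw [Pq, Finset.prod_range_succ', mul_comm]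
  congr 1
  refine Finset.prod_congr rfl fun j _ => ?_
  congr 3
  omega

/-- The q-Pascal identity. -/
lemma Fq_pascal {q : ℚ} (hq : 1 < q) (m k : ℕ) :
    Fq q (m + 1) (k + 1) = Fq q (m + 1) k + q ^ (k + 1) * Fq q m (k + 1) := by
  have hDk := Dq_ne_zero hq k
  have hDk1 := Dq_ne_zero hq (k + 1)
  have hE : q ^ (k + 1) - 1 ≠ 0 := by
    have h1 : 1 < q ^ (k + 1) := one_lt_pow₀ hq (by omega)
    intro h
    rw [sub_eq_zero] at h
    rw [← h] at h1
    exact lt_irrefl _ h1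
  have hD : Dq q (k + 1) = Dq q k * (q ^ (k + 1) - 1) := by
    rw [Dq, Finset.prod_range_succ]; rfl
  rw [Fq, Fq, Fq, Pq_succ, Pq_succ', hD]
  field_simp
  ring

lemma Nq_eq_Fq (q : ℕ) (hq : 2 ≤ q) (k : ℕ) : ∀ m, (Nq q m k : ℚ) = Fq (q : ℚ) m k := by
  have hq1 : (1 : ℚ) < (q : ℚ) := by exact_mod_cast hq
  induction k with
  | zero => intro m; simp [Nq_zero_right, Fq, Pq, Dq]
  | succ k ihk =>
      intro m
      induction m with
      | zero =>
          rw [Nq_zero_left, Fq]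
          have hPD : Pq (q : ℚ) 0 (k + 1) = Dq (q : ℚ) (k + 1) := by
            refine Finset.prod_congr rfl fun j _ => ?_
            congr 3
            omega
          rw [hPD, div_self (Dq_ne_zero hq1 (k + 1))]
          norm_num
      | succ m ihm =>
          rw [Nq_succ_succ]
          push_cast
          rw [ihm, ihk (m + 1), Fq_pascal hq1]

/-! ### Counting the compatible partitions -/

/-- The box of multiplicity functions compatible with `lam`. -/
def boxFinset (q : ℕ) {k : ℕ} (lam : Fin k → ℕ) : Finset (Fin k → ℕ) :=
  Fintype.piFinset fun i => Finset.Ico (deltaStat q lam i) (deltaStat q lam i + q ^ lam i)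

lemma step_lemma {q : ℕ} {b a a' x : ℕ} (hba : b ≤ a) (hba' : b ≤ a')
    (h1 : ∑ j ∈ Finset.Ico b a, q ^ j ≤ x)
    (h1' : ∑ j ∈ Finset.Ico b a', q ^ j ≤ x)
    (h2 : x < ∑ j ∈ Finset.Ico b a, q ^ j + q ^ a)
    (h2' : x < ∑ j ∈ Finset.Ico b a', q ^ j + q ^ a') : a = a' := by
  have key : ∀ c c' : ℕ, b ≤ c → c < c' →
      (∑ j ∈ Finset.Ico b c, q ^ j ≤ x) → (x < ∑ j ∈ Finset.Ico b c, q ^ j + q ^ c) →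
      (∑ j ∈ Finset.Ico b c', q ^ j ≤ x) → False := by
    intro c c' hbc hcc' g1 g2 g1'
    have hsub : Finset.Ico b (c + 1) ⊆ Finset.Ico b c' := Finset.Ico_subset_Ico le_rfl hcc'
    have hmono : ∑ j ∈ Finset.Ico b (c + 1), q ^ j ≤ ∑ j ∈ Finset.Ico b c', q ^ j :=
      Finset.sum_le_sum_of_subset hsub
    rw [Finset.sum_Ico_succ_top hbc] at hmono
    omega
  rcases lt_trichotomy a a' with h | h | h
  · exact absurd (key a a' hba h h1 h2 h1') (fun hf => hf.elim)
  · exact h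
  · exact absurd (key a' a hba' h h1' h2' h1) (fun hf => hf.elim)

/-- Uniqueness of the compatible partition: `λ` is determined by `μ`. -/
lemma lam_unique {q k : ℕ} {lam lam' f : Fin k → ℕ}
    (h : Antitone lam) (h' : Antitone lam')
    (hm : ∀ i, deltaStat q lam i ≤ f i ∧ f i < deltaStat q lam i + q ^ lam i)
    (hm' : ∀ i, deltaStat q lam' i ≤ f i ∧ f i < deltaStat q lam' i + q ^ lam' i) :
    lam = lam' := by
  have key : ∀ d : ℕ, ∀ i : Fin k, k - 1 - (i : ℕ) ≤ d → lam i = lam' i := by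
    intro d
    induction d with
    | zero =>
        intro i hi
        have hnlt : ¬ ((i : ℕ) + 1 < k) := by have := i.isLt; omega
        have e1 : deltaStat q lam i = ∑ j ∈ Finset.Ico 0 (lam i), q ^ j := by
          rw [deltaStat, nextPart, dif_neg hnlt]
        have e1' : deltaStat q lam' i = ∑ j ∈ Finset.Ico 0 (lam' i), q ^ j := by
          rw [deltaStat, nextPart, dif_neg hnlt]
        obtain ⟨g1, g2⟩ := hm i
        obtain ⟨g1', g2'⟩ := hm' i
        rw [e1] at g1 g2
        rw [e1'] at g1' g2'
        exact step_lemma (Nat.zero_le _) (Nat.zero_le _) g1 g1' g2 g2'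
    | succ d ih =>
        intro i hi
        by_cases hlt : (i : ℕ) + 1 < k
        · have hnext : lam ⟨(i : ℕ) + 1, hlt⟩ = lam' ⟨(i : ℕ) + 1, hlt⟩ :=
            ih ⟨(i : ℕ) + 1, hlt⟩ (by simp only []; omega)
          have e1 : deltaStat q lam i
              = ∑ j ∈ Finset.Ico (lam ⟨(i : ℕ) + 1, hlt⟩) (lam i), q ^ j := by
            rw [deltaStat, nextPart, dif_pos hlt]
          have e1' : deltaStat q lam' i
              = ∑ j ∈ Finset.Ico (lam ⟨(i : ℕ) + 1, hlt⟩) (lam' i), q ^ j := by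
            rw [deltaStat, nextPart, dif_pos hlt, hnext]
          have hile : i ≤ (⟨(i : ℕ) + 1, hlt⟩ : Fin k) := Fin.le_def.mpr (Nat.le_succ _)
          have hb : lam ⟨(i : ℕ) + 1, hlt⟩ ≤ lam i := h hile
          have hb' : lam ⟨(i : ℕ) + 1, hlt⟩ ≤ lam' i := hnext ▸ h' hile
          obtain ⟨g1, g2⟩ := hm i
          obtain ⟨g1', g2'⟩ := hm' i
          rw [e1] at g1 g2
          rw [e1'] at g1' g2'
          exact step_lemma hb hb' g1 g1' g2 g2'
        · have e1 : deltaStat q lam i = ∑ j ∈ Finset.Ico 0 (lam i), q ^ j := by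
            rw [deltaStat, nextPart, dif_neg hlt]
          have e1' : deltaStat q lam' i = ∑ j ∈ Finset.Ico 0 (lam' i), q ^ j := by
            rw [deltaStat, nextPart, dif_neg hlt]
          obtain ⟨g1, g2⟩ := hm i
          obtain ⟨g1', g2'⟩ := hm' i
          rw [e1] at g1 g2
          rw [e1'] at g1' g2'
          exact step_lemma (Nat.zero_le _) (Nat.zero_le _) g1 g1' g2 g2'
  funext i
  exact key (k - 1 - (i : ℕ)) i le_rfl

/-- For an integer `q ≥ 2` and `0 ≤ k ≤ n`, the ordinary q-binomial coefficient
`[n choose k]_q = ∏_{i=1}^{k} (q^n - q^{i-1})/(q^k - q^{i-1})` equals the number of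
partitions `μ` (with parts in `{q^k - q^{k-i}}`, encoded by multiplicity functions `m`)
that are q-compatible with some partition `λ` fitting inside a `k × (n-k)` rectangle. -/
theorem qbinom_counts_compatible_partitions (q n k : ℕ) (hq : 2 ≤ q) (hk : k ≤ n) :
    (Set.ncard {m : Fin k → ℕ | ∃ lam : Fin k → ℕ, Antitone lam ∧ (∀ i, lam i ≤ n - k) ∧
        ∀ i, deltaStat q lam i ≤ m i ∧ m i < deltaStat q lam i + q ^ lam i} : ℚ)
      = ∏ i ∈ Finset.range k, (((q : ℚ) ^ n - (q : ℚ) ^ i) / ((q : ℚ) ^ k - (q : ℚ) ^ i)) := by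
  classical
  have hq0 : (q : ℚ) ≠ 0 := Nat.cast_ne_zero.mpr (by omega)
  -- Step 1: the set is the (disjoint) union of boxes
  have hset : {m : Fin k → ℕ | ∃ lam : Fin k → ℕ, Antitone lam ∧ (∀ i, lam i ≤ n - k) ∧
        ∀ i, deltaStat q lam i ≤ m i ∧ m i < deltaStat q lam i + q ^ lam i}
      = ↑((antiFinset (n - k) k).biUnion (boxFinset q)) := by
    ext f
    simp only [Set.mem_setOf_eq, Finset.coe_biUnion, Set.mem_iUnion, Finset.mem_coe,
      boxFinset, Fintype.mem_piFinset, Finset.mem_Ico, mem_antiFinset]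
    constructor
    · rintro ⟨lam, h1, h2, h3⟩; exact ⟨lam, ⟨h2, h1⟩, h3⟩
    · rintro ⟨lam, ⟨h2, h1⟩, h3⟩; exact ⟨lam, h1, h2, h3⟩
  have hdisj : ∀ x ∈ antiFinset (n - k) k, ∀ y ∈ antiFinset (n - k) k, x ≠ y →
      Disjoint (boxFinset q x) (boxFinset q y) := by
    intro x hx y hy hxy
    rw [Finset.disjoint_left]
    intro f hfx hfy
    rw [mem_antiFinset] at hx hy
    apply hxy
    refine lam_unique (q := q) (f := f) hx.2 hy.2 ?_ ?_
    · intro i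
      have := (Fintype.mem_piFinset.mp hfx) i
      rw [Finset.mem_Ico] at this
      exact this
    · intro i
      have := (Fintype.mem_piFinset.mp hfy) i
      rw [Finset.mem_Ico] at this
      exact this
  have hcard : ((antiFinset (n - k) k).biUnion (boxFinset q)).card = Nq q (n - k) k := by
    rw [Finset.card_biUnion hdisj]
    refine Finset.sum_congr rfl fun lam _ => ?_
    rw [boxFinset, Fintype.card_piFinset]
    refine Finset.prod_congr rfl fun i _ => ?_
    rw [Nat.card_Ico]
    omega
  rw [hset, Set.ncard_coe_finset, hcard, Nq_eq_Fq q hq k (n - k)]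
  -- Step 2: the rational identity
  have step1 : ∀ i ∈ Finset.range k,
      ((q : ℚ) ^ n - (q : ℚ) ^ i) / ((q : ℚ) ^ k - (q : ℚ) ^ i)
        = ((q : ℚ) ^ (n - i) - 1) / ((q : ℚ) ^ (k - i) - 1) := by
    intro i hi
    rw [Finset.mem_range] at hi
    have e1 : (q : ℚ) ^ n = q ^ i * q ^ (n - i) := by
      rw [← pow_add]; congr 1; omega
    have e2 : (q : ℚ) ^ k = q ^ i * q ^ (k - i) := by
      rw [← pow_add]; congr 1; omega
    rw [e1, e2, show (q : ℚ) ^ i * q ^ (n - i) - q ^ i = q ^ i * (q ^ (n - i) - 1) by ring,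
      show (q : ℚ) ^ i * q ^ (k - i) - q ^ i = q ^ i * (q ^ (k - i) - 1) by ring,
      mul_div_mul_left _ _ (pow_ne_zero i hq0)]
  rw [Finset.prod_congr rfl step1,
    ← Finset.prod_range_reflect (fun i => ((q : ℚ) ^ (n - i) - 1) / ((q : ℚ) ^ (k - i) - 1)) k,
    Fq, Pq, Dq, ← Finset.prod_div_distrib]
  refine Finset.prod_congr rfl fun j hj => ?_
  rw [Finset.mem_range] at hj
  have ea : n - (k - 1 - j) = n - k + j + 1 := by omega
  have eb : k - (k - 1 - j) = j + 1 := by omega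
  rw [ea, eb]
end
end

section
/- For any composition α = (α_1,...,α_ℓ) of n, the (q,t)-multinomial coefficient factors as [n choose α]_{q,t} = [n choose α_1]_{q,t} · φ^{α_1}([n - α_1 choose (α_2,...,α_ℓ)]_{q,t}), where φ is the substitution t ↦ t^q. Consequently, for integers q ≥ 2 it is a polynomial in t with nonnegative coefficients. -/
noncomputable section

/-- The inclusive partial sum `σ_s = α_1 + … + α_s`. -/
def sigTo {l : ℕ} (α : Fin l → ℕ) (s : Fin l) : ℕ :=
  ∑ s' ∈ Finset.univ.filter (fun s' => s' ≤ s), α s'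

/-- The (q,t)-multinomial coefficient
`[n choose α]_{q,t} = ∏_{i=1}^{n}(1 - t^{q^n - q^{n-i}}) / ∏_s ∏_{i=1}^{α_s}(1 - t^{q^{σ_s} - q^{σ_s - i}})`,
where `n = Σ α_s`, as a function of `t`. -/
def qtmulti (q : ℕ) {l : ℕ} (α : Fin l → ℕ) (t : RatFunc ℚ) : RatFunc ℚ :=
  (∏ i ∈ Finset.range (∑ s, α s),
      (1 - t ^ (q ^ (∑ s, α s) - q ^ ((∑ s, α s) - 1 - i))))
    / ∏ s : Fin l, ∏ i ∈ Finset.range (α s),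
        (1 - t ^ (q ^ sigTo α s - q ^ (sigTo α s - 1 - i)))

/-- The (q,t)-binomial `[n choose k]_{q,t}` in product form. -/
def qtbin (q n k : ℕ) (t : RatFunc ℚ) : RatFunc ℚ :=
  ∏ i ∈ Finset.range k, (1 - t ^ (q ^ n - q ^ i)) / (1 - t ^ (q ^ k - q ^ i))

lemma one_sub_X_pow_map (m : ℕ) :
    (1 - (RatFunc.X : RatFunc ℚ) ^ m) = algebraMap (Polynomial ℚ) (RatFunc ℚ) (1 - Polynomial.X ^ m) := by
  simp [map_sub, map_pow, RatFunc.algebraMap_X]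

lemma one_sub_X_pow_ne_zero {m : ℕ} (hm : 1 ≤ m) :
    (1 - (RatFunc.X : RatFunc ℚ) ^ m) ≠ 0 := by
  rw [one_sub_X_pow_map]
  intro h
  have h2 : (1 - Polynomial.X ^ m : Polynomial ℚ) = 0 :=
    RatFunc.algebraMap_injective ℚ (by simpa using h)
  have := congrArg (fun p => Polynomial.coeff p m) h2
  simp only [Polynomial.coeff_sub, Polynomial.coeff_one, Polynomial.coeff_X_pow,
    Polynomial.coeff_zero, if_pos rfl, if_neg (by omega : ¬ m = 0)] at this
  norm_num at this

lemma qtbin_eq (q n k : ℕ) (t : RatFunc ℚ) :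
    qtbin q n k t
      = (∏ i ∈ Finset.range k, (1 - t ^ (q ^ n - q ^ i)))
        / (∏ i ∈ Finset.range k, (1 - t ^ (q ^ k - q ^ i))) := by
  rw [qtbin, Finset.prod_div_distrib]

lemma pascal (q c n j : ℕ) (hq : 2 ≤ q) (hc : 1 ≤ c) (hjn : j ≤ n) :
    qtbin q (n+1) (j+1) (RatFunc.X ^ c)
      = qtbin q n j (RatFunc.X ^ (c * q))
        + RatFunc.X ^ (c * (q ^ (j+1) - 1)) * qtbin q n (j+1) (RatFunc.X ^ (c * q))
          * ∏ i ∈ Finset.range (j+1),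
              ∑ m ∈ Finset.range q,
                (RatFunc.X : RatFunc ℚ) ^ (c * (q ^ (j+1) - q ^ i) * m) := by
  have hXce : ∀ e : ℕ, ((RatFunc.X : RatFunc ℚ) ^ c) ^ e = RatFunc.X ^ (c * e) :=
    fun e => (pow_mul _ _ _).symm
  have hXcqe : ∀ e : ℕ, ((RatFunc.X : RatFunc ℚ) ^ (c * q)) ^ e = RatFunc.X ^ (c * (q * e)) :=
    fun e => by rw [← pow_mul, mul_assoc]
  have hqe : ∀ a b : ℕ, q * (q ^ a - q ^ b) = q ^ (a+1) - q ^ (b+1) := fun a b => by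
    rw [Nat.mul_sub, ← pow_succ', ← pow_succ']
  have hpow1 : ∀ a b : ℕ, b < a → 1 ≤ q ^ a - q ^ b := fun a b h => by
    have := Nat.pow_lt_pow_right (by omega : 1 < q) h
    omega
  have hA : ∀ e : ℕ, 1 ≤ e → (1 - (RatFunc.X : RatFunc ℚ) ^ (c * e)) ≠ 0 := fun e he =>
    one_sub_X_pow_ne_zero (by have := Nat.mul_le_mul hc he; simpa using this)
  -- rewritten qtbins
  have e1 : qtbin q (n+1) (j+1) (RatFunc.X ^ c)
      = (∏ i ∈ Finset.range (j+1), (1 - (RatFunc.X : RatFunc ℚ) ^ (c * (q ^ (n+1) - q ^ i))))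
        / (∏ i ∈ Finset.range (j+1), (1 - (RatFunc.X : RatFunc ℚ) ^ (c * (q ^ (j+1) - q ^ i)))) := by
    rw [qtbin_eq]
    congr 1 <;> exact Finset.prod_congr rfl fun i _ => by rw [hXce]
  have e2 : qtbin q n j (RatFunc.X ^ (c * q))
      = (∏ i ∈ Finset.range j, (1 - (RatFunc.X : RatFunc ℚ) ^ (c * (q ^ (n+1) - q ^ (i+1)))))
        / (∏ i ∈ Finset.range j, (1 - (RatFunc.X : RatFunc ℚ) ^ (c * (q ^ (j+1) - q ^ (i+1))))) := by
    rw [qtbin_eq]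
    congr 1 <;> exact Finset.prod_congr rfl fun i _ => by rw [hXcqe, hqe]
  have e3 : qtbin q n (j+1) (RatFunc.X ^ (c * q))
      = (∏ i ∈ Finset.range (j+1), (1 - (RatFunc.X : RatFunc ℚ) ^ (c * (q ^ (n+1) - q ^ (i+1)))))
        / (∏ i ∈ Finset.range (j+1), (1 - (RatFunc.X : RatFunc ℚ) ^ (c * (q ^ (j+2) - q ^ (i+1))))) := by
    rw [qtbin_eq]
    congr 1 <;> exact Finset.prod_congr rfl fun i _ => by rw [hXcqe, hqe]
  -- peel
  have peel_num : (∏ i ∈ Finset.range (j+1), (1 - (RatFunc.X : RatFunc ℚ) ^ (c * (q ^ (n+1) - q ^ i))))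
      = (1 - (RatFunc.X : RatFunc ℚ) ^ (c * (q ^ (n+1) - 1)))
        * ∏ i ∈ Finset.range j, (1 - (RatFunc.X : RatFunc ℚ) ^ (c * (q ^ (n+1) - q ^ (i+1)))) := by
    rw [Finset.prod_range_succ', pow_zero, mul_comm]
  have peel_den : (∏ i ∈ Finset.range (j+1), (1 - (RatFunc.X : RatFunc ℚ) ^ (c * (q ^ (j+1) - q ^ i))))
      = (1 - (RatFunc.X : RatFunc ℚ) ^ (c * (q ^ (j+1) - 1)))
        * ∏ i ∈ Finset.range j, (1 - (RatFunc.X : RatFunc ℚ) ^ (c * (q ^ (j+1) - q ^ (i+1)))) := by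
    rw [Finset.prod_range_succ', pow_zero, mul_comm]
  have peel_N2 : (∏ i ∈ Finset.range (j+1), (1 - (RatFunc.X : RatFunc ℚ) ^ (c * (q ^ (n+1) - q ^ (i+1)))))
      = (∏ i ∈ Finset.range j, (1 - (RatFunc.X : RatFunc ℚ) ^ (c * (q ^ (n+1) - q ^ (i+1)))))
        * (1 - (RatFunc.X : RatFunc ℚ) ^ (c * (q ^ (n+1) - q ^ (j+1)))) :=
    Finset.prod_range_succ _ _
  -- geometric identity
  have geoS : (∏ i ∈ Finset.range (j+1), (1 - (RatFunc.X : RatFunc ℚ) ^ (c * (q ^ (j+2) - q ^ (i+1)))))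
      = (∏ i ∈ Finset.range (j+1), (1 - (RatFunc.X : RatFunc ℚ) ^ (c * (q ^ (j+1) - q ^ i))))
        * ∏ i ∈ Finset.range (j+1),
            ∑ m ∈ Finset.range q, (RatFunc.X : RatFunc ℚ) ^ (c * (q ^ (j+1) - q ^ i) * m) := by
    rw [← Finset.prod_mul_distrib]
    refine Finset.prod_congr rfl fun i _ => ?_
    have h1 : ∀ m : ℕ, (RatFunc.X : RatFunc ℚ) ^ (c * (q ^ (j+1) - q ^ i) * m)
        = ((RatFunc.X : RatFunc ℚ) ^ (c * (q ^ (j+1) - q ^ i))) ^ m := fun m => pow_mul _ _ _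
    simp only [h1]
    have h2 := geom_sum_mul ((RatFunc.X : RatFunc ℚ) ^ (c * (q ^ (j+1) - q ^ i))) q
    have h3 : c * (q ^ (j+2) - q ^ (i+1)) = c * (q ^ (j+1) - q ^ i) * q := by
      rw [← hqe, mul_comm q, mul_assoc]
    rw [h3, pow_mul]
    linear_combination h2
  -- nonvanishing
  have hD1 : (∏ i ∈ Finset.range j, (1 - (RatFunc.X : RatFunc ℚ) ^ (c * (q ^ (j+1) - q ^ (i+1))))) ≠ 0 :=
    Finset.prod_ne_zero_iff.mpr fun i hi =>
      hA _ (hpow1 _ _ (by simp only [Finset.mem_range] at hi; omega))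
  have hAK : (1 - (RatFunc.X : RatFunc ℚ) ^ (c * (q ^ (j+1) - 1))) ≠ 0 := by
    have := hpow1 (j+1) 0 (by omega)
    rw [pow_zero] at this
    exact hA _ this
  have hDk : (∏ i ∈ Finset.range (j+1), (1 - (RatFunc.X : RatFunc ℚ) ^ (c * (q ^ (j+1) - q ^ i)))) ≠ 0 :=
    Finset.prod_ne_zero_iff.mpr fun i hi =>
      hA _ (hpow1 _ _ (by simp only [Finset.mem_range] at hi; omega))
  have hD2 : (∏ i ∈ Finset.range (j+1), (1 - (RatFunc.X : RatFunc ℚ) ^ (c * (q ^ (j+2) - q ^ (i+1))))) ≠ 0 :=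
    Finset.prod_ne_zero_iff.mpr fun i hi =>
      hA _ (hpow1 _ _ (by simp only [Finset.mem_range] at hi; omega))
  have hS : (∏ i ∈ Finset.range (j+1),
      ∑ m ∈ Finset.range q, (RatFunc.X : RatFunc ℚ) ^ (c * (q ^ (j+1) - q ^ i) * m)) ≠ 0 := by
    intro h
    exact hD2 (by rw [geoS, h, mul_zero])
  -- the key exponent identity
  have key : (1 - (RatFunc.X : RatFunc ℚ) ^ (c * (q ^ (n+1) - 1)))
      = (1 - (RatFunc.X : RatFunc ℚ) ^ (c * (q ^ (j+1) - 1)))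
        + RatFunc.X ^ (c * (q ^ (j+1) - 1))
          * (1 - (RatFunc.X : RatFunc ℚ) ^ (c * (q ^ (n+1) - q ^ (j+1)))) := by
    have h1 : q ^ (j+1) ≤ q ^ (n+1) := Nat.pow_le_pow_right (by omega) (by omega)
    have h2 : 1 ≤ q ^ (j+1) := Nat.one_le_pow _ _ (by omega)
    have hsum : c * (q ^ (j+1) - 1) + c * (q ^ (n+1) - q ^ (j+1)) = c * (q ^ (n+1) - 1) := by
      rw [← Nat.mul_add]
      congr 1
      omega
    rw [← hsum, pow_add]
    ring
  -- assemble
  rw [e1, e2, e3, geoS, peel_num, peel_den, peel_N2, key]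
  field_simp [hD1, hAK, hS]

lemma NN_mul {p r : Polynomial ℚ} (hp : ∀ i, 0 ≤ p.coeff i) (hr : ∀ i, 0 ≤ r.coeff i) :
    ∀ i, 0 ≤ (p * r).coeff i := by
  intro i
  rw [Polynomial.coeff_mul]
  exact Finset.sum_nonneg fun x _ => mul_nonneg (hp _) (hr _)

lemma NN_prod {s : Finset ℕ} {f : ℕ → Polynomial ℚ} (h : ∀ a ∈ s, ∀ i, 0 ≤ (f a).coeff i) :
    ∀ i, 0 ≤ (∏ a ∈ s, f a).coeff i := by
  classical
  induction s using Finset.induction with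
  | empty => intro i; simp [Polynomial.coeff_one]; positivity
  | @insert a s hx ih =>
      rw [Finset.prod_insert hx]
      exact NN_mul (h a (by simp)) (ih fun b hb => h b (by simp [hb]))

lemma NN_geo (c e qq : ℕ) :
    ∀ i, 0 ≤ (∑ m ∈ Finset.range qq, (Polynomial.X : Polynomial ℚ) ^ (c * e * m)).coeff i := by
  intro i
  rw [Polynomial.finset_sum_coeff]
  refine Finset.sum_nonneg fun m _ => ?_
  simp only [Polynomial.coeff_X_pow]
  positivity

lemma qtbin_overflow (q n : ℕ) (t : RatFunc ℚ) : qtbin q n (n+1) t = 0 := by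
  rw [qtbin]
  apply Finset.prod_eq_zero (Finset.self_mem_range_succ n)
  simp [Nat.sub_self]

lemma bin_pos (q : ℕ) (hq : 2 ≤ q) :
    ∀ n k c : ℕ, k ≤ n → 1 ≤ c →
      ∃ p : Polynomial ℚ, (∀ i, 0 ≤ p.coeff i) ∧
        algebraMap (Polynomial ℚ) (RatFunc ℚ) p = qtbin q n k (RatFunc.X ^ c) := by
  intro n
  induction n with
  | zero =>
      intro k c hk _
      obtain rfl : k = 0 := Nat.le_zero.mp hk
      exact ⟨1, by intro i; simp [Polynomial.coeff_one]; positivity, by simp [qtbin]⟩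
  | succ n IH =>
      intro k c hk hc
      match k, hk with
      | 0, _ => exact ⟨1, by intro i; simp [Polynomial.coeff_one]; positivity, by simp [qtbin]⟩
      | j+1, hk =>
        have hj : j ≤ n := by omega
        have hcq : 1 ≤ c * q := by
          calc 1 = 1 * 1 := by ring
          _ ≤ c * q := Nat.mul_le_mul hc (by omega)
        obtain ⟨pa, hpa, hma⟩ := IH j (c * q) hj hcq
        obtain ⟨pb, hpb, hmb⟩ : ∃ pb : Polynomial ℚ, (∀ i, 0 ≤ pb.coeff i) ∧
            algebraMap (Polynomial ℚ) (RatFunc ℚ) pb = qtbin q n (j+1) (RatFunc.X ^ (c * q)) := by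
          rcases Nat.lt_or_ge j n with h | h
          · exact IH (j+1) (c * q) h hcq
          · have hje : j = n := le_antisymm hj h
            subst hje
            exact ⟨0, by intro i; simp, by rw [map_zero, qtbin_overflow]⟩
        refine ⟨pa + Polynomial.X ^ (c * (q ^ (j+1) - 1)) * pb
            * ∏ i ∈ Finset.range (j+1),
                ∑ m ∈ Finset.range q, Polynomial.X ^ (c * (q ^ (j+1) - q ^ i) * m), ?_, ?_⟩
        · intro i
          have hgnn : ∀ i, 0 ≤ (∏ i ∈ Finset.range (j+1),
              ∑ m ∈ Finset.range q, (Polynomial.X : Polynomial ℚ) ^ (c * (q ^ (j+1) - q ^ i) * m)).coeff i :=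
            NN_prod fun a _ => NN_geo c _ q
          have h1 : ∀ i, 0 ≤ ((Polynomial.X : Polynomial ℚ) ^ (c * (q ^ (j+1) - 1))).coeff i := by
            intro i; simp only [Polynomial.coeff_X_pow]; positivity
          rw [Polynomial.coeff_add]
          exact add_nonneg (hpa i) (NN_mul (NN_mul h1 hpb) hgnn i)
        · rw [map_add, map_mul, map_mul, map_pow, hma, hmb, pascal q c n j hq hc hj]
          simp [map_prod, map_sum, map_pow, RatFunc.algebraMap_X]

lemma sigTo_zero {l : ℕ} (α : Fin (l+1) → ℕ) : sigTo α 0 = α 0 := by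
  simp [sigTo, Fin.le_zero_iff, Finset.filter_eq']

lemma sigTo_succ {l : ℕ} (α : Fin (l+1) → ℕ) (s : Fin l) :
    sigTo α s.succ = α 0 + sigTo (Fin.tail α) s := by
  rw [sigTo, sigTo, Finset.sum_filter, Finset.sum_filter, Fin.sum_univ_succ]
  simp [Fin.succ_le_succ_iff, Fin.tail]

lemma self_le_sigTo {l : ℕ} (α : Fin l → ℕ) (s : Fin l) : α s ≤ sigTo α s :=
  Finset.single_le_sum (fun i _ => Nat.zero_le (α i)) (by simp)

lemma qtmulti_factor (q l : ℕ) (α : Fin (l + 1) → ℕ) (t : RatFunc ℚ) :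
    qtmulti q α t = qtbin q (∑ s, α s) (α 0) t * qtmulti q (Fin.tail α) (t ^ q ^ α 0) := by
  have hn : (∑ s, α s) = α 0 + ∑ s : Fin l, Fin.tail α s := by
    rw [Fin.sum_univ_succ]; rfl
  have hpowmul : ∀ e : ℕ, (t ^ q ^ α 0) ^ e = t ^ (q ^ α 0 * e) := fun e => (pow_mul _ _ _).symm
  -- numerator split
  have hnum : (∏ i ∈ Finset.range (∑ s, α s),
        (1 - t ^ (q ^ (∑ s, α s) - q ^ ((∑ s, α s) - 1 - i))))
      = (∏ i ∈ Finset.range (α 0), (1 - t ^ (q ^ (∑ s, α s) - q ^ i)))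
        * ∏ i ∈ Finset.range (∑ s : Fin l, Fin.tail α s),
            (1 - (t ^ q ^ α 0) ^
              (q ^ (∑ s : Fin l, Fin.tail α s) - q ^ ((∑ s : Fin l, Fin.tail α s) - 1 - i))) := by
    rw [Finset.prod_range_reflect (fun j => 1 - t ^ (q ^ (∑ s, α s) - q ^ j)) (∑ s, α s)]
    conv_lhs => rw [hn]
    rw [Finset.prod_range_add]
    congr 1
    · exact Finset.prod_congr rfl fun i _ => by rw [← hn]
    · refine Eq.trans ?_ (Finset.prod_range_reflect (fun j => 1 - (t ^ q ^ α 0) ^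
          (q ^ (∑ s : Fin l, Fin.tail α s) - q ^ j)) (∑ s : Fin l, Fin.tail α s)).symm
      refine Finset.prod_congr rfl fun i _ => ?_
      rw [hpowmul, Nat.mul_sub, ← pow_add, ← pow_add]
  -- denominator split
  have hden : (∏ s : Fin (l+1), ∏ i ∈ Finset.range (α s),
        (1 - t ^ (q ^ sigTo α s - q ^ (sigTo α s - 1 - i))))
      = (∏ i ∈ Finset.range (α 0), (1 - t ^ (q ^ (α 0) - q ^ i)))
        * ∏ s : Fin l, ∏ i ∈ Finset.range (Fin.tail α s),
            (1 - (t ^ q ^ α 0) ^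
              (q ^ sigTo (Fin.tail α) s - q ^ (sigTo (Fin.tail α) s - 1 - i))) := by
    rw [Fin.prod_univ_succ]
    congr 1
    · rw [sigTo_zero,
        ← Finset.prod_range_reflect (fun j => 1 - t ^ (q ^ (α 0) - q ^ j)) (α 0)]
    · refine Finset.prod_congr rfl fun s _ => ?_
      refine Finset.prod_congr rfl fun i hi => ?_
      simp only [Finset.mem_range] at hi
      have hle : Fin.tail α s ≤ sigTo (Fin.tail α) s := self_le_sigTo _ _
      have harith : (α 0 + sigTo (Fin.tail α) s) - 1 - i
          = α 0 + (sigTo (Fin.tail α) s - 1 - i) := by omega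
      rw [sigTo_succ, hpowmul, Nat.mul_sub, ← pow_add, ← pow_add, harith]
  rw [qtmulti, hnum, hden, qtbin_eq, qtmulti, div_mul_div_comm]

lemma multi_pos (q : ℕ) (hq : 2 ≤ q) :
    ∀ (l : ℕ) (α : Fin (l+1) → ℕ) (c : ℕ), 1 ≤ c →
      ∃ p : Polynomial ℚ, (∀ i, 0 ≤ p.coeff i) ∧
        algebraMap (Polynomial ℚ) (RatFunc ℚ) p = qtmulti q α (RatFunc.X ^ c) := by
  intro l
  induction l with
  | zero =>
      intro α c hc
      refine ⟨1, by intro i; simp [Polynomial.coeff_one]; positivity, ?_⟩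
      rw [map_one, qtmulti]
      have hsum : (∑ s : Fin 1, α s) = α 0 := Fin.sum_univ_one α
      have hsig : sigTo α (0 : Fin 1) = α 0 := sigTo_zero α
      rw [Fin.prod_univ_one, hsig, hsum]
      rw [div_self]
      refine Finset.prod_ne_zero_iff.mpr fun i hi => ?_
      simp only [Finset.mem_range] at hi
      rw [show ((RatFunc.X : RatFunc ℚ) ^ c) ^ (q ^ α 0 - q ^ (α 0 - 1 - i))
          = RatFunc.X ^ (c * (q ^ α 0 - q ^ (α 0 - 1 - i))) from (pow_mul _ _ _).symm]
      apply one_sub_X_pow_ne_zero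
      have hlt : q ^ (α 0 - 1 - i) < q ^ α 0 :=
        Nat.pow_lt_pow_right (by omega) (by omega)
      have : 1 ≤ q ^ α 0 - q ^ (α 0 - 1 - i) := by omega
      calc 1 = 1 * 1 := by ring
      _ ≤ c * (q ^ α 0 - q ^ (α 0 - 1 - i)) := Nat.mul_le_mul hc this
  | succ l IH =>
      intro α c hc
      rw [qtmulti_factor, show ((RatFunc.X : RatFunc ℚ) ^ c) ^ q ^ α 0
          = RatFunc.X ^ (c * q ^ α 0) from (pow_mul _ _ _).symm]
      have hk : α 0 ≤ ∑ s, α s := by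
        rw [Fin.sum_univ_succ]; exact Nat.le_add_right _ _
      obtain ⟨p1, h1, m1⟩ := bin_pos q hq (∑ s, α s) (α 0) c hk hc
      have hc2 : 1 ≤ c * q ^ α 0 := by
        calc 1 = 1 * 1 := by ring
        _ ≤ c * q ^ α 0 := Nat.mul_le_mul hc (Nat.one_le_pow _ _ (by omega))
      obtain ⟨p2, h2, m2⟩ := IH (Fin.tail α) (c * q ^ α 0) hc2
      exact ⟨p1 * p2, NN_mul h1 h2, by rw [map_mul, m1, m2]⟩

/-- For any composition `α = (α_1,…,α_ℓ)` of `n`, the (q,t)-multinomial factors as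
`[n choose α]_{q,t} = [n choose α_1]_{q,t} · φ^{α_1}([n - α_1 choose (α_2,…,α_ℓ)]_{q,t})`,
where `φ` is `t ↦ t^q`; consequently for integers `q ≥ 2` it is a polynomial in `t`
with nonnegative coefficients. -/
theorem qtmulti_factorization_and_positivity (q l : ℕ) (α : Fin (l + 1) → ℕ) (hq : 2 ≤ q) :
    qtmulti q α RatFunc.X
        = qtbin q (∑ s, α s) (α 0) RatFunc.X * qtmulti q (Fin.tail α) (RatFunc.X ^ q ^ α 0) ∧
      ∃ p : Polynomial ℚ, (∀ i, 0 ≤ p.coeff i) ∧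
        algebraMap (Polynomial ℚ) (RatFunc ℚ) p = qtmulti q α RatFunc.X := by
  constructor
  · exact qtmulti_factor q l α RatFunc.X
  · obtain ⟨p, h, m⟩ := multi_pos q hq l α 1 le_rfl
    rw [pow_one] at m
    exact ⟨p, h, m⟩
end
end

section
/- (MacMahon-type determinant for (q,t)-ribbon numbers) For any composition α = (α_1,...,α_ℓ) of n with partial sums σ_i, Σ_{β refined by α} (-1)^{ℓ(α)-ℓ(β)} [n choose β]_{q,t} = n!_{q,t} · det( φ^{σ_{i-1}}( 1/(σ_j - σ_{i-1})!_{q,t} ) )_{i,j=1}^{ℓ}, where entries with σ_j - σ_{i-1} < 0 are 0 and φ^m substitutes t ↦ t^{q^m}. -/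
noncomputable section

/-- The (q,t)-factorial `m!_{q,t}`, as a function of `t`. -/
def qtfact (q m : ℕ) (t : RatFunc ℚ) : RatFunc ℚ :=
  ∏ i ∈ Finset.range m, (1 - t ^ (q ^ m - q ^ i))

/-- The (q,t)-multinomial `[n choose β]_{q,t} = n!_{q,t}/β!_{q,t}` for a composition `β`. -/
def qtmultiC (q n : ℕ) (c : Composition n) (t : RatFunc ℚ) : RatFunc ℚ :=
  qtfact q n t / ∏ s : Fin c.length, qtfact q (c.blocksFun s) (t ^ q ^ c.sizeUpTo (s : ℕ))

namespace QtRibbon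
open Finset

/-! ### Generalities on compositions -/

lemma comp_ext' {n : ℕ} {c₁ c₂ : Composition n} (h : c₁.blocks = c₂.blocks) : c₁ = c₂ := by
  cases c₁; cases c₂; simp_all

lemma length_eq_of_sizeUpTo {n : ℕ} {c₁ c₂ : Composition n}
    (h : ∀ i, c₁.sizeUpTo i = c₂.sizeUpTo i) : c₁.length = c₂.length := by
  by_contra hne
  wlog hlt : c₁.length < c₂.length generalizing c₁ c₂
  · exact this (fun i => (h i).symm) (Ne.symm hne) (by omega)
  have h1 : c₁.sizeUpTo c₁.length = n := c₁.sizeUpTo_length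
  have h2 : c₂.sizeUpTo c₁.length < c₂.sizeUpTo (c₁.length + 1) :=
    c₂.sizeUpTo_strict_mono hlt
  have h3 : c₂.sizeUpTo (c₁.length + 1) ≤ n := c₂.sizeUpTo_le _
  have := h c₁.length
  omega

lemma ext_sizeUpTo {n : ℕ} {c₁ c₂ : Composition n}
    (h : ∀ i, c₁.sizeUpTo i = c₂.sizeUpTo i) : c₁ = c₂ := by
  have hl := length_eq_of_sizeUpTo h
  apply comp_ext'
  apply List.ext_getElem (by rw [c₁.blocks_length, c₂.blocks_length, hl])
  intro i h1 h2
  have hi1 : i < c₁.length := by rwa [c₁.blocks_length] at h1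
  have hi2 : i < c₂.length := by rwa [c₂.blocks_length] at h2
  have e1 := c₁.sizeUpTo_succ hi1
  have e2 := c₂.sizeUpTo_succ hi2
  have := h i; have := h (i+1)
  omega

lemma blocksFun_eq {n : ℕ} (c : Composition n) (s : Fin c.length) :
    c.blocksFun s = c.sizeUpTo ((s : ℕ)+1) - c.sizeUpTo s := by
  have := c.sizeUpTo_succ' s
  omega

lemma gather_sizeUpTo {n : ℕ} (c : Composition n) (d : Composition c.length) (i : ℕ) :
    (c.gather d).sizeUpTo i = c.sizeUpTo (d.sizeUpTo i) := by
  rcases lt_or_ge i d.length with hi | hi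
  · have h0 : 0 < d.blocksFun ⟨i, hi⟩ := d.one_le_blocksFun _
    have := Composition.sizeUpTo_sizeUpTo_add c d hi h0
    simpa using this.symm
  · rw [Composition.sizeUpTo_ofLength_le _ i (by rw [Composition.length_gather]; exact hi),
      Composition.sizeUpTo_ofLength_le _ i hi, Composition.sizeUpTo_length]

lemma sizeUpTo_lt_sizeUpTo {n : ℕ} (c : Composition n) {i j : ℕ} (hj : j ≤ c.length)
    (hij : i < j) : c.sizeUpTo i < c.sizeUpTo j := by
  calc c.sizeUpTo i < c.sizeUpTo (i+1) := c.sizeUpTo_strict_mono (by omega)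
  _ ≤ c.sizeUpTo j := c.monotone_sizeUpTo (by omega)

lemma sizeUpTo_inj {n : ℕ} (c : Composition n) {i j : ℕ} (hi : i ≤ c.length)
    (hj : j ≤ c.length) (h : c.sizeUpTo i = c.sizeUpTo j) : i = j := by
  by_contra hne
  rcases Nat.lt_or_ge i j with hlt | hge
  · exact absurd h (Nat.ne_of_lt (sizeUpTo_lt_sizeUpTo c hj hlt))
  · exact absurd h.symm (Nat.ne_of_lt (sizeUpTo_lt_sizeUpTo c hi (by omega)))

lemma mem_boundaries_iff {n : ℕ} (c : Composition n) (x : Fin (n+1)) :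
    x ∈ c.boundaries ↔ ∃ k ≤ c.length, (x : ℕ) = c.sizeUpTo k := by
  simp only [Composition.boundaries, Finset.mem_map, Finset.mem_univ, true_and]
  constructor
  · rintro ⟨k, rfl⟩
    exact ⟨k, by omega, rfl⟩
  · rintro ⟨k, hk, hx⟩
    exact ⟨⟨k, by omega⟩, by simp [Composition.boundary, Fin.ext_iff, hx]⟩

/-! ### Hessenberg determinants -/

variable {K : Type*} [Field K]

/-- Abstract Hessenberg-type matrix. -/
def hess (f : ℕ → ℕ → K) (N : ℕ) : Matrix (Fin N) (Fin N) K :=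
  Matrix.of fun i j => if (i : ℕ) ≤ (j : ℕ) + 1 then f i ((j : ℕ) + 1) else 0

lemma coe_succAbove {N : ℕ} (i : Fin (N+1)) (j : Fin N) :
    ((i.succAbove j : Fin (N+1)) : ℕ) = if (j : ℕ) < (i : ℕ) then (j : ℕ) else (j : ℕ) + 1 := by
  rcases lt_or_ge ((j : ℕ) : ℕ) (i : ℕ) with h | h
  · rw [Fin.succAbove_of_castSucc_lt i j (by simpa [Fin.lt_def] using h)]
    simp [h]
  · rw [Fin.succAbove_of_le_castSucc i j (by simpa [Fin.le_def] using h)]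
    simp [Nat.not_lt.mpr h]

lemma det_peel {i : ℕ} : ∀ (k : ℕ) (A : Matrix (Fin (i+k)) (Fin (i+k)) K),
    (∀ r c : Fin (i+k), i ≤ (r:ℕ) → (c:ℕ) < (r:ℕ) → A r c = 0) →
    (∀ r : Fin (i+k), i ≤ (r:ℕ) → A r r = 1) →
    A.det = Matrix.det (Matrix.of fun r c : Fin i =>
      A (Fin.castLE (Nat.le_add_right i k) r) (Fin.castLE (Nat.le_add_right i k) c))
  | 0, A, h0, h1 => by
    have h : (Matrix.of fun r c : Fin i =>
        A (Fin.castLE (Nat.le_add_right i 0) r) (Fin.castLE (Nat.le_add_right i 0) c)) = A := by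
      ext r c
      simp only [Matrix.of_apply]
      congr 1 <;> exact (Fin.ext rfl)
    rw [h]
  | (k+1), A, h0, h1 => by
    have hexp : A.det = ∑ j : Fin (i+k+1),
        (-1 : K) ^ ((i + k) + (j : ℕ)) * A (Fin.last (i+k)) j *
          (A.submatrix (Fin.last (i+k)).succAbove j.succAbove).det :=
      Matrix.det_succ_row A (Fin.last (i+k))
    rw [hexp]
    rw [Finset.sum_eq_single (Fin.last (i+k)) (fun j _ hj => by
      have hjlt : (j : ℕ) < i + k := by
        have h2 := j.isLt
        have h3 : (j : ℕ) ≠ i + k := fun h => hj (Fin.ext h)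
        omega
      rw [h0 (Fin.last (i+k)) j (by simp only [Fin.val_last]; omega)
        (by simpa using hjlt)]
      ring) (by simp)]
    rw [h1 (Fin.last (i+k)) (by simp only [Fin.val_last]; omega)]
    have hsign : (-1 : K) ^ ((i + k) + ((Fin.last (i+k) : Fin (i+k+1)) : ℕ)) = 1 := by
      rw [Fin.val_last]
      exact Even.neg_one_pow ⟨i + k, rfl⟩
    rw [hsign, Fin.succAbove_last, one_mul, one_mul]
    have ih := det_peel k (A.submatrix Fin.castSucc Fin.castSucc)
      (fun r c hr hc => h0 _ _ (by simpa using hr) (by simpa using hc))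
      (fun r hr => h1 _ (by simpa using hr))
    rw [ih]
    congr 1

lemma det_hess_principal {N : ℕ} (f : ℕ → ℕ → K) (hf : ∀ a, f a a = 1) (i : Fin (N+1)) :
    ((hess f (N+1)).submatrix i.succAbove Fin.castSucc).det = (hess f (i : ℕ)).det := by
  have hiN : (i : ℕ) + (N - (i : ℕ)) = N := by omega
  set A := (hess f (N+1)).submatrix i.succAbove Fin.castSucc with hA
  have hdet : A.det = (A.submatrix (finCongr hiN) (finCongr hiN)).det :=
    (Matrix.det_submatrix_equiv_self (finCongr hiN) A).symm
  rw [hdet]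
  have key : ∀ (r c : Fin ((i : ℕ) + (N - (i : ℕ)))),
      (A.submatrix (finCongr hiN) (finCongr hiN)) r c =
        if ((i.succAbove (finCongr hiN r) : Fin (N+1)) : ℕ) ≤ (c : ℕ) + 1
          then f ((i.succAbove (finCongr hiN r) : Fin (N+1)) : ℕ) ((c : ℕ) + 1) else 0 := by
    intro r c
    simp [hA, hess, finCongr_apply, Fin.coe_cast]
  have hcoe : ∀ r : Fin ((i : ℕ) + (N - (i : ℕ))),
      ((i.succAbove (finCongr hiN r) : Fin (N+1)) : ℕ)
        = if (r : ℕ) < (i : ℕ) then (r : ℕ) else (r : ℕ) + 1 := by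
    intro r
    rw [coe_succAbove]
    simp [finCongr_apply, Fin.coe_cast]
  rw [det_peel (N - (i : ℕ)) (A.submatrix (finCongr hiN) (finCongr hiN))
    (by
      intro r c hr hc
      rw [key, hcoe, if_neg (show ¬ (r : ℕ) < (i : ℕ) by omega), if_neg (by omega)])
    (by
      intro r hr
      rw [key, hcoe, if_neg (show ¬ (r : ℕ) < (i : ℕ) by omega), if_pos (by omega)]
      exact hf _)]
  congr 1
  ext r c
  rw [Matrix.of_apply, key, hcoe]
  simp only [Fin.coe_castLE]
  rw [if_pos r.isLt]
  simp only [hess, Matrix.of_apply]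

lemma det_hess_succ (f : ℕ → ℕ → K) (hf : ∀ a, f a a = 1) (N : ℕ) :
    (hess f (N+1)).det
      = ∑ i : Fin (N+1), (-1 : K) ^ ((i : ℕ) + N) * f i (N+1) * (hess f (i : ℕ)).det := by
  have hexp : (hess f (N+1)).det = ∑ i : Fin (N+1),
      (-1 : K) ^ ((i : ℕ) + N) * hess f (N+1) i (Fin.last N) *
        ((hess f (N+1)).submatrix i.succAbove (Fin.last N).succAbove).det :=
    Matrix.det_succ_column _ (Fin.last N)
  rw [hexp]
  refine Finset.sum_congr rfl fun i _ => ?_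
  have h1 : hess f (N+1) i (Fin.last N) = f i (N+1) := by
    simp only [hess, Matrix.of_apply, Fin.val_last]
    rw [if_pos (by omega)]
  rw [Fin.succAbove_last, det_hess_principal f hf i, h1]

/-! ### The composition-indexed alternating sum -/

/-- Composition-indexed alternating sum. -/
def compSum (f : ℕ → ℕ → K) (N : ℕ) : K :=
  ∑ d : Composition N, (-1 : K) ^ (N - d.length) *
    ∏ m ∈ Finset.range d.length, f (d.sizeUpTo m) (d.sizeUpTo (m + 1))

lemma comp_zero_blocks (d : Composition 0) : d.blocks = [] := by
  rcases hd : d.blocks with _ | ⟨a, l⟩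
  · rfl
  · exfalso
    have h1 : 0 < a := d.blocks_pos (by rw [hd]; exact List.mem_cons_self)
    have h2 := d.blocks_sum
    rw [hd] at h2
    simp at h2
    omega

instance : Unique (Composition 0) where
  default := ⟨[], by intro i h; simp at h, rfl⟩
  uniq d := comp_ext' (comp_zero_blocks d)

lemma compSum_zero (f : ℕ → ℕ → K) : compSum f 0 = 1 := by
  rw [compSum, Fintype.sum_unique]
  have h : (default : Composition 0).length = 0 := by
    simp [Composition.length, comp_zero_blocks]
  simp only [show ∀ d : Composition 0, d.length = 0 from fun d => by
    simp [Composition.length, comp_zero_blocks]]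
  simp

/-- Appending a last block to a composition. -/
def app (N : ℕ) (p : Σ i : Fin (N+1), Composition (i : ℕ)) : Composition (N+1) where
  blocks := p.2.blocks ++ [N + 1 - (p.1 : ℕ)]
  blocks_pos := by
    intro x hx
    rcases List.mem_append.1 hx with h | h
    · exact p.2.blocks_pos h
    · have := p.1.isLt
      simp at h
      omega
  blocks_sum := by
    have := p.1.isLt
    simp [p.2.blocks_sum]

lemma app_bijective (N : ℕ) : Function.Bijective (app N) := by
  constructor
  · rintro ⟨i, d⟩ ⟨j, e⟩ h
    have hb : d.blocks ++ [N + 1 - (i : ℕ)] = e.blocks ++ [N + 1 - (j : ℕ)] :=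
      congrArg Composition.blocks h
    obtain ⟨h1, h2⟩ := List.append_inj' hb rfl
    have hij : (i : ℕ) = (j : ℕ) := by
      have := i.isLt; have := j.isLt
      simp at h2
      omega
    have : i = j := Fin.ext hij
    subst this
    congr 1
    exact comp_ext' h1
  · intro b
    have hne : b.blocks ≠ [] := by
      intro h
      have := b.blocks_sum
      rw [h] at this
      simp at this
    set m := b.blocks.getLast hne with hm
    have hmem : m ∈ b.blocks := List.getLast_mem hne
    have hmpos : 0 < m := b.blocks_pos hmem
    have hsplit : b.blocks.dropLast ++ [m] = b.blocks := List.dropLast_append_getLast hne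
    have hsum : b.blocks.dropLast.sum + m = N + 1 := by
      have := b.blocks_sum
      rw [← hsplit] at this
      simpa using this
    have hile : b.blocks.dropLast.sum < N + 1 := by omega
    refine ⟨⟨⟨b.blocks.dropLast.sum, hile⟩,
      ⟨b.blocks.dropLast, ?_, rfl⟩⟩, ?_⟩
    · intro x hx
      exact b.blocks_pos (List.mem_of_mem_dropLast hx)
    · apply comp_ext'
      show b.blocks.dropLast ++ [N + 1 - b.blocks.dropLast.sum] = b.blocks
      have : N + 1 - b.blocks.dropLast.sum = m := by omega
      rw [this, hsplit]

lemma app_length {N : ℕ} (p : Σ i : Fin (N+1), Composition (i : ℕ)) :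
    (app N p).length = p.2.length + 1 := by
  simp [app, Composition.length]

lemma app_sizeUpTo {N : ℕ} (p : Σ i : Fin (N+1), Composition (i : ℕ)) {k : ℕ}
    (hk : k ≤ p.2.length) : (app N p).sizeUpTo k = p.2.sizeUpTo k := by
  simp only [Composition.sizeUpTo, app]
  rw [List.take_append_of_le_length (by rwa [p.2.blocks_length])]

lemma app_sizeUpTo_last {N : ℕ} (p : Σ i : Fin (N+1), Composition (i : ℕ)) :
    (app N p).sizeUpTo (p.2.length + 1) = N + 1 := by
  rw [← app_length p]
  exact (app N p).sizeUpTo_length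

lemma neg_one_pow_sub {a b : ℕ} (h : b ≤ a) :
    ((-1 : K)) ^ (a - b) = (-1) ^ a * (-1) ^ b := by
  have h1 : ((-1 : K)) ^ (a - b) * (-1) ^ b = (-1) ^ a := by
    rw [← pow_add, Nat.sub_add_cancel h]
  calc ((-1 : K)) ^ (a - b) = (-1) ^ (a - b) * ((-1) ^ b * (-1) ^ b) := by
        rw [← pow_add, Even.neg_one_pow ⟨b, rfl⟩, mul_one]
    _ = ((-1) ^ (a - b) * (-1) ^ b) * (-1) ^ b := by ring
    _ = (-1) ^ a * (-1) ^ b := by rw [h1]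

lemma compSum_succ (f : ℕ → ℕ → K) (N : ℕ) :
    compSum f (N+1)
      = ∑ i : Fin (N+1), (-1 : K) ^ ((i : ℕ) + N) * f i (N+1) * compSum f (i : ℕ) := by
  rw [compSum]
  rw [← Fintype.sum_bijective (app N) (app_bijective N) _ _ (fun p => rfl)]
  rw [← Finset.univ_sigma_univ, Finset.sum_sigma]
  refine Finset.sum_congr rfl fun i _ => ?_
  rw [compSum, Finset.mul_sum]
  refine Finset.sum_congr rfl fun d _ => ?_
  have hdl : d.length ≤ (i : ℕ) := d.length_le
  have hiN : (i : ℕ) ≤ N := by have := i.isLt; omega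
  have hlen : (app N ⟨i, d⟩).length = d.length + 1 := app_length ⟨i, d⟩
  have hprod : ∏ m ∈ Finset.range (app N ⟨i, d⟩).length,
      f ((app N ⟨i, d⟩).sizeUpTo m) ((app N ⟨i, d⟩).sizeUpTo (m + 1))
      = (∏ m ∈ Finset.range d.length, f (d.sizeUpTo m) (d.sizeUpTo (m + 1))) * f i (N+1) := by
    rw [hlen, Finset.prod_range_succ]
    congr 1
    · refine Finset.prod_congr rfl fun m hm => ?_
      rw [Finset.mem_range] at hm
      rw [app_sizeUpTo ⟨i, d⟩ hm.le, app_sizeUpTo ⟨i, d⟩ hm]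
    · rw [app_sizeUpTo ⟨i, d⟩ le_rfl, app_sizeUpTo_last ⟨i, d⟩, d.sizeUpTo_length]
  rw [hprod, hlen]
  have hsign : ((-1 : K)) ^ (N + 1 - (d.length + 1))
      = (-1) ^ ((i : ℕ) + N) * (-1) ^ ((i : ℕ) - d.length) := by
    rw [Nat.succ_sub_succ, neg_one_pow_sub (le_trans hdl hiN),
      neg_one_pow_sub hdl, pow_add]
    have hsq : (-1 : K) ^ (i : ℕ) * (-1) ^ (i : ℕ) = 1 := by
      rw [← pow_add]; exact Even.neg_one_pow ⟨(i : ℕ), rfl⟩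
    calc ((-1 : K)) ^ N * (-1) ^ d.length
        = ((-1 : K) ^ (i : ℕ) * (-1) ^ (i : ℕ)) * ((-1) ^ N * (-1) ^ d.length) := by
          rw [hsq, one_mul]
      _ = ((-1) ^ (i : ℕ) * (-1) ^ N) * ((-1) ^ (i : ℕ) * (-1) ^ d.length) := by ring
  rw [hsign]
  ring

lemma det_hess_eq (f : ℕ → ℕ → K) (hf : ∀ a, f a a = 1) (N : ℕ) :
    (hess f N).det = compSum f N := by
  induction N using Nat.strong_induction_on with
  | _ N ih =>
    match N with
    | 0 => rw [compSum_zero]; exact Matrix.det_fin_zero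
    | (M+1) =>
      rw [det_hess_succ f hf M, compSum_succ f M]
      exact Finset.sum_congr rfl fun i _ => by rw [ih i (by omega)]

/-! ### Telescoping helper -/

lemma telescope {e : ℕ → ℕ} : ∀ J : ℕ, (∀ j, j < J → e j ≤ e (j+1)) →
    e 0 ≤ e J ∧ ∑ j ∈ Finset.range J, (e (j+1) - e j) = e J - e 0
  | 0, _ => ⟨le_rfl, by simp⟩
  | (J+1), h => by
    obtain ⟨h1, h2⟩ := telescope J (fun j hj => h j (by omega))
    have h3 := h J (by omega)
    refine ⟨h1.trans h3, ?_⟩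
    rw [Finset.sum_range_succ, h2]
    omega

end QtRibbon

set_option maxHeartbeats 2000000 in
open QtRibbon Finset in
/-- (MacMahon-type determinant for (q,t)-ribbon numbers) For a composition `α` of `n` with
partial sums `σ_i`, `Σ_{β refined by α} (-1)^{ℓ(α)-ℓ(β)} [n choose β]_{q,t}
 = n!_{q,t} · det(φ^{σ_{i-1}}(1/(σ_j - σ_{i-1})!_{q,t}))`, where entries with
`σ_j - σ_{i-1} < 0` are `0` and `φ^m` substitutes `t ↦ t^{q^m}`. -/
theorem qt_ribbon_determinant (q n : ℕ) (c : Composition n) (hq : 2 ≤ q) :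
    ∑ b ∈ Finset.univ.filter (fun b : Composition n => b.boundaries ⊆ c.boundaries),
        (-1 : RatFunc ℚ) ^ (c.length - b.length) * qtmultiC q n b RatFunc.X
      = qtfact q n RatFunc.X *
          Matrix.det (Matrix.of fun i j : Fin c.length =>
            if c.sizeUpTo (i : ℕ) ≤ c.sizeUpTo ((j : ℕ) + 1) then
              (qtfact q (c.sizeUpTo ((j : ℕ) + 1) - c.sizeUpTo (i : ℕ))
                  ((RatFunc.X : RatFunc ℚ) ^ q ^ c.sizeUpTo (i : ℕ)))⁻¹
            else 0) := by
  classical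
  set fφ : ℕ → ℕ → RatFunc ℚ := fun a b =>
    (qtfact q (c.sizeUpTo b - c.sizeUpTo a)
      ((RatFunc.X : RatFunc ℚ) ^ q ^ c.sizeUpTo a))⁻¹ with hfφ
  have hf1 : ∀ a, fφ a a = 1 := by
    intro a
    simp [hfφ, qtfact]
  -- identify the matrix with the abstract Hessenberg matrix
  have hmat : (Matrix.of fun i j : Fin c.length =>
      if c.sizeUpTo (i : ℕ) ≤ c.sizeUpTo ((j : ℕ) + 1) then
        (qtfact q (c.sizeUpTo ((j : ℕ) + 1) - c.sizeUpTo (i : ℕ))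
            ((RatFunc.X : RatFunc ℚ) ^ q ^ c.sizeUpTo (i : ℕ)))⁻¹
      else 0) = hess fφ c.length := by
    ext i j
    simp only [Matrix.of_apply, hess]
    by_cases h : (i : ℕ) ≤ (j : ℕ) + 1
    · rw [if_pos h, if_pos (c.monotone_sizeUpTo h)]
    · rw [if_neg h, if_neg (by
        have : c.sizeUpTo ((j : ℕ) + 1) < c.sizeUpTo (i : ℕ) :=
          sizeUpTo_lt_sizeUpTo c i.isLt.le (by omega)
        omega)]
  rw [hmat, det_hess_eq fφ hf1 c.length]
  -- reindex the sum over coarsenings by compositions of `c.length`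
  have hterm : ∀ d : Composition c.length,
      (-1 : RatFunc ℚ) ^ (c.length - (c.gather d).length) * qtmultiC q n (c.gather d) RatFunc.X
        = qtfact q n RatFunc.X * ((-1 : RatFunc ℚ) ^ (c.length - d.length) *
            ∏ m ∈ Finset.range d.length, fφ (d.sizeUpTo m) (d.sizeUpTo (m + 1))) := by
    intro d
    have hlen : (c.gather d).length = d.length := Composition.length_gather c d
    have hprod : ∏ s : Fin (c.gather d).length,
        qtfact q ((c.gather d).blocksFun s)
          ((RatFunc.X : RatFunc ℚ) ^ q ^ (c.gather d).sizeUpTo (s : ℕ))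
        = ∏ m ∈ Finset.range d.length,
            qtfact q (c.sizeUpTo (d.sizeUpTo (m+1)) - c.sizeUpTo (d.sizeUpTo m))
              ((RatFunc.X : RatFunc ℚ) ^ q ^ c.sizeUpTo (d.sizeUpTo m)) := by
      calc ∏ s : Fin (c.gather d).length,
          qtfact q ((c.gather d).blocksFun s)
            ((RatFunc.X : RatFunc ℚ) ^ q ^ (c.gather d).sizeUpTo (s : ℕ))
          = ∏ s : Fin (c.gather d).length,
            qtfact q ((c.gather d).sizeUpTo ((s : ℕ)+1) - (c.gather d).sizeUpTo (s : ℕ))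
              ((RatFunc.X : RatFunc ℚ) ^ q ^ (c.gather d).sizeUpTo (s : ℕ)) := by
            exact Finset.prod_congr rfl fun s _ => by rw [blocksFun_eq]
        _ = ∏ m ∈ Finset.range (c.gather d).length,
            qtfact q ((c.gather d).sizeUpTo (m+1) - (c.gather d).sizeUpTo m)
              ((RatFunc.X : RatFunc ℚ) ^ q ^ (c.gather d).sizeUpTo m) :=
            Fin.prod_univ_eq_prod_range (fun m =>
              qtfact q ((c.gather d).sizeUpTo (m+1) - (c.gather d).sizeUpTo m)
                ((RatFunc.X : RatFunc ℚ) ^ q ^ (c.gather d).sizeUpTo m)) ((c.gather d).length)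
        _ = _ := by
            rw [hlen]
            exact Finset.prod_congr rfl fun m _ => by
              rw [gather_sizeUpTo, gather_sizeUpTo]
    rw [qtmultiC, div_eq_mul_inv, hprod, hlen, ← Finset.prod_inv_distrib]
    ring
  have hbij : (∑ d : Composition c.length,
        (-1 : RatFunc ℚ) ^ (c.length - (c.gather d).length) * qtmultiC q n (c.gather d) RatFunc.X)
      = ∑ b ∈ Finset.univ.filter (fun b : Composition n => b.boundaries ⊆ c.boundaries),
          (-1 : RatFunc ℚ) ^ (c.length - b.length) * qtmultiC q n b RatFunc.X := by
    refine Finset.sum_bij (fun d _ => c.gather d) ?_ ?_ ?_ (fun d _ => rfl)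
    · -- maps into the filter
      intro d _
      rw [Finset.mem_filter]
      refine ⟨Finset.mem_univ _, ?_⟩
      intro x hx
      rw [mem_boundaries_iff] at hx ⊢
      obtain ⟨k, hk, hxk⟩ := hx
      refine ⟨d.sizeUpTo k, d.sizeUpTo_le k, ?_⟩
      rw [hxk, gather_sizeUpTo]
    · -- injective
      intro d₁ _ d₂ _ h
      have hs : ∀ i, d₁.sizeUpTo i = d₂.sizeUpTo i := by
        intro i
        have h' : c.gather d₁ = c.gather d₂ := h
        have h1 : c.sizeUpTo (d₁.sizeUpTo i) = c.sizeUpTo (d₂.sizeUpTo i) := by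
          rw [← gather_sizeUpTo, ← gather_sizeUpTo, h']
        exact sizeUpTo_inj c (d₁.sizeUpTo_le i) (d₂.sizeUpTo_le i) h1
      exact ext_sizeUpTo hs
    · -- surjective
      intro b hb
      rw [Finset.mem_filter] at hb
      have hsub := hb.2
      have hex : ∀ j : ℕ, j ≤ b.length → ∃ k, k ≤ c.length ∧ b.sizeUpTo j = c.sizeUpTo k := by
        intro j hj
        have hmem : (⟨b.sizeUpTo j, Nat.lt_succ_of_le (b.sizeUpTo_le j)⟩ : Fin (n+1))
            ∈ b.boundaries := by
          rw [mem_boundaries_iff]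
          exact ⟨j, hj, rfl⟩
        have hmem2 := hsub hmem
        rw [mem_boundaries_iff] at hmem2
        obtain ⟨k, hk, hkk⟩ := hmem2
        exact ⟨k, hk, hkk⟩
      set e : ℕ → ℕ := fun j => if h : j ≤ b.length then (hex j h).choose else 0 with he
      have hespec : ∀ j, j ≤ b.length → e j ≤ c.length ∧ b.sizeUpTo j = c.sizeUpTo (e j) := by
        intro j h
        simp only [he, dif_pos h]
        exact (hex j h).choose_spec
      have he0 : e 0 = 0 := by
        refine sizeUpTo_inj c (hespec 0 (Nat.zero_le _)).1 (Nat.zero_le _) ?_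
        rw [← (hespec 0 (Nat.zero_le _)).2]
        simp
      have helast : e b.length = c.length := by
        refine sizeUpTo_inj c (hespec b.length le_rfl).1 le_rfl ?_
        rw [← (hespec b.length le_rfl).2]
        simp
      have hemono : ∀ j, j < b.length → e j < e (j+1) := by
        intro j hj
        by_contra hcon
        have h1 : b.sizeUpTo j < b.sizeUpTo (j+1) := b.sizeUpTo_strict_mono hj
        have h2 := (hespec j hj.le).2
        have h3 := (hespec (j+1) hj).2
        have h4 : c.sizeUpTo (e (j+1)) ≤ c.sizeUpTo (e j) :=
          c.monotone_sizeUpTo (by omega)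
        omega
      have htel := telescope b.length (fun j hj => (hemono j hj).le)
      refine ⟨⟨List.ofFn (fun j : Fin b.length => e ((j : ℕ)+1) - e (j : ℕ)), ?_, ?_⟩,
        Finset.mem_univ _, ?_⟩
      · intro x hx
        rw [List.mem_ofFn] at hx
        obtain ⟨j, rfl⟩ := hx
        exact Nat.sub_pos_of_lt (hemono j j.isLt)
      · rw [List.sum_ofFn]
        rw [Fin.sum_univ_eq_sum_range (fun j => e (j+1) - e j) b.length]
        rw [htel.2, he0, helast]
        omega
      · -- gather equals b
        set d : Composition c.length :=
          ⟨List.ofFn (fun j : Fin b.length => e ((j : ℕ)+1) - e (j : ℕ)), by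
            intro x hx
            rw [List.mem_ofFn] at hx
            obtain ⟨j, rfl⟩ := hx
            exact Nat.sub_pos_of_lt (hemono j j.isLt), by
            rw [List.sum_ofFn]
            rw [Fin.sum_univ_eq_sum_range (fun j => e (j+1) - e j) b.length]
            rw [htel.2, he0, helast]
            omega⟩ with hd
        show c.gather d = b
        have hdlen : d.length = b.length := by
          simp [hd, Composition.length]
        have hdsize : ∀ j, j ≤ b.length → d.sizeUpTo j = e j := by
          intro j
          induction j with
          | zero => intro _; rw [Composition.sizeUpTo_zero, he0]
          | succ j ihj =>
            intro hj
            have hjlt : j < d.length := by omega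
            rw [d.sizeUpTo_succ hjlt, ihj (by omega)]
            have hblk : d.blocks[j] = e (j+1) - e j := by
              simp [hd]
            rw [hblk]
            have := hemono j (by omega)
            omega
        refine ext_sizeUpTo fun i => ?_
        rw [gather_sizeUpTo]
        rcases le_or_gt i b.length with hi | hi
        · rw [hdsize i hi, ← (hespec i hi).2]
        · rw [Composition.sizeUpTo_ofLength_le d i (by omega),
            Composition.sizeUpTo_ofLength_le b i (by omega)]
          exact c.sizeUpTo_length
  rw [← hbij]
  rw [compSum, Finset.mul_sum]
  refine Finset.sum_congr rfl fun d _ => ?_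
  rw [hterm d]
end
end
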